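/- arXiv:cs/0404021 — 9 statements merged into one kernel-verified Lean document; each statement's English description precedes it below -/
import Mathlib

section
/- Let f : X → X be a continuous map on a compact Hausdorff space X and let V ⊆ X be a clopen set. Then the topological boundary of the basin B(V) = ⋃_{n≥0} f^{-n}(V) is invariant under f, i.e., f(∂B(V)) ⊆ ∂B(V). -/
/-- The topological boundary of the basin `B(V) = ⋃ n ≥ 0, f⁻ⁿ(V)` of a clopen
set `V` is invariant under `f`. -/
theorem frontier_basin_invariant (X : Type*) [TopologicalSpace X] [CompactSpace X]
    [T2Space X] (f : X → X) (hf : Continuous f) (V : Set X) (hV : IsClopen V) :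
    f '' frontier (⋃ n : ℕ, f^[n] ⁻¹' V) ⊆ frontier (⋃ n : ℕ, f^[n] ⁻¹' V) := by
  set B := ⋃ n : ℕ, f^[n] ⁻¹' V with hB
  have hVB : V ⊆ B := fun x hx => Set.mem_iUnion.2 ⟨0, hx⟩
  have hpre : f ⁻¹' B ⊆ B := by
    intro x hx
    obtain ⟨n, hn⟩ := Set.mem_iUnion.1 hx
    exact Set.mem_iUnion.2 ⟨n + 1, by simpa [Function.iterate_succ_apply] using hn⟩
  have hopenB : IsOpen B := isOpen_iUnion fun n => hV.isOpen.preimage (hf.iterate n)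
  -- B ∩ Vᶜ ⊆ f ⁻¹' B
  have hsub : B ∩ Vᶜ ⊆ f ⁻¹' B := by
    rintro x ⟨hxB, hxV⟩
    obtain ⟨n, hn⟩ := Set.mem_iUnion.1 hxB
    cases n with
    | zero => exact absurd hn hxV
    | succ m =>
      exact Set.mem_preimage.2 (Set.mem_iUnion.2
        ⟨m, by simpa [Function.iterate_succ_apply] using hn⟩)
  rintro y ⟨x, hx, rfl⟩
  rw [frontier, hopenB.interior_eq] at hx ⊢
  obtain ⟨hxc, hxB⟩ := hx
  have hxV : x ∉ V := fun h => hxB (hVB h)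
  constructor
  · -- f x ∈ closure B
    have h1 : x ∈ Vᶜ ∩ closure B := ⟨hxV, hxc⟩
    have h2 : x ∈ closure (Vᶜ ∩ B) := hV.isClosed.isOpen_compl.inter_closure h1
    have h3 : x ∈ closure (f ⁻¹' B) :=
      closure_mono (fun z hz => hsub ⟨hz.2, hz.1⟩) h2
    exact hf.closure_preimage_subset B h3
  · exact fun h => hxB (hpre h)
end

section
/- Let f : X → X be a continuous map on a compact metric space X such that every nonempty closed f-invariant subset of X has nonempty interior. Then for every clopen set V ⊆ X, the basin B(V) = ⋃_{n≥0} f^{-n}(V) is clopen. -/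
/-- If every nonempty closed invariant subset of a compact metric system has
nonempty interior, then every clopen set has a clopen basin. -/
theorem clopen_basin_of_subsystems_nonempty_interior (X : Type*) [MetricSpace X]
    [CompactSpace X] (f : X → X) (hf : Continuous f)
    (hsub : ∀ Y : Set X, Y.Nonempty → IsClosed Y → f '' Y ⊆ Y →
      (interior Y).Nonempty)
    (V : Set X) (hV : IsClopen V) :
    IsClopen (⋃ n : ℕ, f^[n] ⁻¹' V) := by
  set B : Set X := ⋃ n : ℕ, f^[n] ⁻¹' V with hBdef
  have hBopen : IsOpen B := isOpen_iUnion fun n => hV.isOpen.preimage (hf.iterate n)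
  have hsubB : f ⁻¹' B ⊆ B := by
    intro x hx
    simp only [hBdef, Set.mem_iUnion, Set.mem_preimage] at hx ⊢
    obtain ⟨n, hn⟩ := hx
    exact ⟨n + 1, by rwa [Function.iterate_succ_apply]⟩
  have key : Vᶜ ∩ B ⊆ f ⁻¹' B := by
    rintro x ⟨hxV, hxB⟩
    simp only [hBdef, Set.mem_iUnion, Set.mem_preimage] at hxB ⊢
    obtain ⟨n, hn⟩ := hxB
    cases n with
    | zero => exact absurd hn hxV
    | succ m => exact ⟨m, by rwa [Function.iterate_succ_apply] at hn⟩
  refine ⟨?_, hBopen⟩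
  rw [← closure_subset_iff_isClosed]
  -- W = closure B \ B is closed, invariant, and has empty interior
  set W : Set X := closure B ∩ Bᶜ with hWdef
  have hWclosed : IsClosed W := isClosed_closure.inter hBopen.isClosed_compl
  have hWinv : f '' W ⊆ W := by
    rintro _ ⟨x, ⟨hxc, hxn⟩, rfl⟩
    have hxV : x ∉ V := fun h => hxn (Set.mem_iUnion.mpr ⟨0, h⟩)
    constructor
    · have h1 : x ∈ closure (Vᶜ ∩ B) := hV.isClosed.isOpen_compl.inter_closure ⟨hxV, hxc⟩
      have h2 : x ∈ closure (f ⁻¹' B) := closure_mono key h1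
      exact hf.closure_preimage_subset B h2
    · exact fun h => hxn (hsubB h)
  intro x hx
  by_contra hxn
  obtain ⟨z, hz⟩ := hsub W ⟨x, hx, hxn⟩ hWclosed hWinv
  have hzW : z ∈ W := interior_subset hz
  obtain ⟨y, hyU, hyB⟩ := mem_closure_iff.mp hzW.1 (interior W) isOpen_interior hz
  exact (interior_subset hyU).2 hyB
end

section
/- An equicontinuous continuous map on a compact metric space has clopen basins: for every clopen set V, the set B(V) = ⋃_{n≥0} f^{-n}(V) is clopen. -/
/-- An equicontinuous continuous map on a compact symbolic space (clopen sets
form a basis) has clopen basins. -/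
theorem equicontinuous_clopen_basins (X : Type*) [MetricSpace X] [CompactSpace X]
    (hbasis : TopologicalSpace.IsTopologicalBasis {s : Set X | IsClopen s})
    (f : X → X) (hf : Continuous f)
    (heq : ∀ ε > (0 : ℝ), ∃ δ > (0 : ℝ), ∀ x y : X, dist x y < δ →
      ∀ t : ℕ, dist (f^[t] x) (f^[t] y) < ε)
    (V : Set X) (hV : IsClopen V) :
    IsClopen (⋃ n : ℕ, f^[n] ⁻¹' V) := by
  constructor
  · -- closed
    obtain ⟨ε, εpos, hth⟩ :=
      (hV.isClosed.isCompact).exists_thickening_subset_open hV.isOpen subset_rfl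
    obtain ⟨δ, δpos, hδ⟩ := heq ε εpos
    rw [← isOpen_compl_iff, Metric.isOpen_iff]
    intro x hx
    refine ⟨δ, δpos, fun y hy => ?_⟩
    simp only [Set.mem_compl_iff, Set.mem_iUnion, Set.mem_preimage, not_exists] at hx ⊢
    intro n hn
    apply hx n
    apply hth
    exact Metric.mem_thickening_iff.mpr ⟨_, hn, hδ x y (by rw [dist_comm]; exact hy) n⟩
  · exact isOpen_iUnion fun n => (hV.isOpen).preimage (hf.iterate n)
end

section
/- Let f : X → X be an equicontinuous continuous self-map of a compact ultrametric space (d(x,z) ≤ max(d(x,y), d(y,z))). Then f has the shadowing property: for every ε > 0 there is δ > 0 such that every δ-pseudo-orbit is ε-shadowed by some point. -/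
/-- An equicontinuous continuous self-map of a compact ultrametric space has the
shadowing property. -/
theorem equicontinuous_shadowing (X : Type*) [MetricSpace X] [CompactSpace X]
    (hultra : ∀ x y z : X, dist x z ≤ max (dist x y) (dist y z))
    (f : X → X) (hf : Continuous f)
    (heq : ∀ ε > (0 : ℝ), ∃ δ > (0 : ℝ), ∀ x y : X, dist x y < δ →
      ∀ t : ℕ, dist (f^[t] x) (f^[t] y) < ε) :
    ∀ ε > (0 : ℝ), ∃ δ > (0 : ℝ), ∀ x : ℕ → X,
      (∀ n : ℕ, dist (f (x n)) (x (n + 1)) < δ) →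
      ∃ y : X, ∀ n : ℕ, dist (f^[n] y) (x n) < ε := by
  intro ε hε
  obtain ⟨δ, hδ, hδε⟩ := heq ε hε
  refine ⟨δ, hδ, fun x hx => ⟨x 0, fun n => ?_⟩⟩
  have key : ∀ n : ℕ, ∀ t : ℕ, dist (f^[t] (f^[n] (x 0))) (f^[t] (x n)) < ε := by
    intro n
    induction n with
    | zero => intro t; simpa using hε
    | succ n ih =>
      intro t
      have h1 : dist (f^[t] (f^[n + 1] (x 0))) (f^[t] (f (x n))) < ε := by
        rw [Function.iterate_succ_apply' f n (x 0)]
        simpa only [Function.iterate_succ_apply] using ih (t + 1)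
      have h2 : dist (f^[t] (f (x n))) (f^[t] (x (n + 1))) < ε := hδε _ _ (hx n) t
      calc dist (f^[t] (f^[n + 1] (x 0))) (f^[t] (x (n + 1)))
          ≤ max (dist (f^[t] (f^[n + 1] (x 0))) (f^[t] (f (x n))))
              (dist (f^[t] (f (x n))) (f^[t] (x (n + 1)))) := hultra _ _ _
        _ < ε := max_lt h1 h2
  simpa using key n 0
end

section
/- In the proof that equicontinuous ultrametric systems satisfy shadowing: if f : X → X is a map on an ultrametric space and δ > 0 is such that d(x,y) < δ implies d(f^t(x), f^t(y)) < ε for all t, then for any δ-pseudo-orbit (x_m), one has d(f^n(x_m), f^{n+m}(x_0)) < ε for all m, n ≥ 0; in particular x_0 ε-shadows the pseudo-orbit. -/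
/-- In an ultrametric space, if `δ`-close points have `ε`-close orbits and
`δ ≤ ε`, then for any `δ`-pseudo-orbit `(x_m)` one has
`d(fⁿ(x_m), f^{n+m}(x_0)) < ε` for all `m, n`; in particular `x_0`
`ε`-shadows the pseudo-orbit. -/
theorem pseudo_orbit_shadowed_by_initial_point (X : Type*) [MetricSpace X]
    (hultra : ∀ x y z : X, dist x z ≤ max (dist x y) (dist y z))
    (f : X → X) (ε δ : ℝ) (hε : 0 < ε) (hδ : 0 < δ) (hδε : δ ≤ ε)
    (hcontr : ∀ x y : X, dist x y < δ → ∀ t : ℕ, dist (f^[t] x) (f^[t] y) < ε)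
    (x : ℕ → X) (hpo : ∀ m : ℕ, dist (f (x m)) (x (m + 1)) < δ) :
    (∀ m n : ℕ, dist (f^[n] (x m)) (f^[n + m] (x 0)) < ε) ∧
      ∀ n : ℕ, dist (f^[n] (x 0)) (x n) < ε := by
  have key : ∀ m n : ℕ, dist (f^[n] (x m)) (f^[n + m] (x 0)) < ε := by
    intro m
    induction m with
    | zero => intro n; simp [hε]
    | succ m ih =>
      intro n
      have h1 : dist (f^[n] (x (m + 1))) (f^[n + 1] (x m)) < ε := by
        have := hcontr (x (m + 1)) (f (x m)) (by rw [dist_comm]; exact hpo m) n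
        rwa [show f^[n + 1] (x m) = f^[n] (f (x m)) by
          rw [Function.iterate_succ_apply]]
      have h2 : dist (f^[n + 1] (x m)) (f^[n + (m + 1)] (x 0)) < ε := by
        have := ih (n + 1)
        rwa [show n + 1 + m = n + (m + 1) by omega] at this
      exact lt_of_le_of_lt (hultra _ (f^[n + 1] (x m)) _) (max_lt h1 h2)
  refine ⟨key, fun n => ?_⟩
  have := key n 0
  simp only [Function.iterate_zero_apply, Nat.zero_add] at this
  rw [dist_comm]; exact this
end

section
/- Let f : X → X be a continuous map on a compact metric space and suppose the limit set ⋂_{n≥0} f^n(X) is a finite union of pairwise disjoint minimal subsystems Y_1, …, Y_k. Then f has clopen basins: for every clopen set V ⊆ X, the basin B(V) = ⋃_{n≥0} f^{-n}(V) is clopen. -/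
/-- A minimal subsystem: a nonempty closed invariant set with no nonempty proper
closed invariant subset. -/
def IsMinimalSubsystem {X : Type*} [TopologicalSpace X] (f : X → X) (Y : Set X) : Prop :=
  Y.Nonempty ∧ IsClosed Y ∧ f '' Y ⊆ Y ∧
    ∀ Z ⊆ Y, Z.Nonempty → IsClosed Z → f '' Z ⊆ Z → Z = Y

/-- If the limit set of a compact symbolic system is a finite union of pairwise
disjoint minimal subsystems, then the system has clopen basins. -/
theorem clopen_basins_of_limit_set_finite_union_minimal (X : Type*) [MetricSpace X]
    [CompactSpace X]
    (hbasis : TopologicalSpace.IsTopologicalBasis {s : Set X | IsClopen s})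
    (f : X → X) (hf : Continuous f)
    (k : ℕ) (Y : Fin k → Set X)
    (hmin : ∀ i, IsMinimalSubsystem f (Y i))
    (hdisj : ∀ i j, i ≠ j → Disjoint (Y i) (Y j))
    (hlimit : (⋂ n : ℕ, f^[n] '' Set.univ) = ⋃ i, Y i) :
    ∀ V : Set X, IsClopen V → IsClopen (⋃ n : ℕ, f^[n] ⁻¹' V) := by
  classical
  intro V hV
  have hcont : ∀ n : ℕ, Continuous (f^[n]) := fun n => hf.iterate n
  by_cases hcase : ∃ N : ℕ, ∀ x : X, (∃ m, f^[m] x ∈ V) → ∃ m ≤ N, f^[m] x ∈ V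
  · -- then the basin is a finite union of clopen sets
    obtain ⟨N, hN⟩ := hcase
    have heq : (⋃ n : ℕ, f^[n] ⁻¹' V) = ⋃ m ∈ Finset.range (N + 1), f^[m] ⁻¹' V := by
      apply Set.Subset.antisymm
      · intro z hz
        obtain ⟨n, hn⟩ := Set.mem_iUnion.mp hz
        obtain ⟨m, hm, hmV⟩ := hN z ⟨n, hn⟩
        exact Set.mem_biUnion (Finset.mem_range.mpr (Nat.lt_succ_of_le hm)) hmV
      · intro z hz
        obtain ⟨m, -, h⟩ := Set.mem_iUnion₂.mp hz
        exact Set.mem_iUnion.mpr ⟨m, h⟩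
    rw [heq]
    exact isClopen_biUnion_finset fun m _ => hV.preimage (hcont m)
  · exfalso
    push_neg at hcase
    -- for every N there is a point entering V only after time N
    choose x hx₁ hx₂ using hcase
    -- first hitting time
    set t : ℕ → ℕ := fun N => Nat.find (hx₁ N) with ht_def
    have ht : ∀ N, f^[t N] (x N) ∈ V := fun N => Nat.find_spec (hx₁ N)
    have ht' : ∀ N, ∀ m < t N, f^[m] (x N) ∉ V := fun N m hm => Nat.find_min (hx₁ N) hm
    have htN : ∀ N, N < t N := by
      intro N
      by_contra h
      exact hx₂ N (t N) (Nat.le_of_not_lt h) (ht N)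
    -- an ultrafilter extending atTop
    let U : Ultrafilter ℕ := Ultrafilter.of Filter.atTop
    have hUle : (U : Filter ℕ) ≤ Filter.atTop := Ultrafilter.of_le _
    -- the backward orbit points
    set g : ℕ → ℕ → X := fun r N => f^[t N - r] (x N) with hg_def
    have hlim : ∀ r : ℕ, ∃ u : X, Filter.Tendsto (g r) U (nhds u) := by
      intro r
      obtain ⟨a, -, ha⟩ := isCompact_univ.ultrafilter_le_nhds (U.map (g r))
        (by simp [Filter.le_principal_iff])
      exact ⟨a, ha⟩
    choose u hu using hlim
    -- f (u (r+1)) = u r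
    have hstep : ∀ r : ℕ, f (u (r + 1)) = u r := by
      intro r
      have h1 : Filter.Tendsto (fun N => f (g (r + 1) N)) U (nhds (f (u (r + 1)))) :=
        (hf.tendsto _).comp (hu (r + 1))
      have h2 : ∀ᶠ N in (U : Filter ℕ), f (g (r + 1) N) = g r N := by
        apply Filter.Eventually.filter_mono hUle
        filter_upwards [Filter.eventually_ge_atTop (r + 1)] with N hN
        have hr : r + 1 ≤ t N := le_trans hN (le_of_lt (htN N))
        have hsub : t N - (r + 1) + 1 = t N - r := by omega
        show f (f^[t N - (r + 1)] (x N)) = f^[t N - r] (x N)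
        rw [← Function.iterate_succ_apply' f, Nat.succ_eq_add_one, hsub]
      exact tendsto_nhds_unique (h1.congr' h2) (hu r)
    -- iterates of u
    have hiter : ∀ m r : ℕ, f^[m] (u (m + r)) = u r := by
      intro m
      induction m with
      | zero => intro r; simp
      | succ m ih =>
        intro r
        have : m + 1 + r = (m + r) + 1 := by omega
        rw [this, Function.iterate_succ_apply, hstep (m + r), ih r]
    -- u 0 ∈ V
    have hu0 : u 0 ∈ V := by
      apply hV.isClosed.mem_of_tendsto (hu 0)
      filter_upwards with N
      simpa [hg_def] using ht N
    -- u r ∉ V for r ≥ 1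
    have huV : ∀ r : ℕ, 1 ≤ r → u r ∉ V := by
      intro r hr
      have : u r ∈ Vᶜ := by
        apply (hV.isOpen.isClosed_compl).mem_of_tendsto (hu r)
        apply Filter.Eventually.filter_mono hUle
        filter_upwards [Filter.eventually_ge_atTop r] with N hN
        have h1 : t N - r < t N := by
          have := htN N; omega
        exact ht' N _ h1
      exact this
    -- u r lies in the limit set
    have huL : ∀ r : ℕ, u r ∈ ⋃ i, Y i := by
      intro r
      rw [← hlimit]
      refine Set.mem_iInter.mpr fun M => ?_
      have hclosed : IsClosed (f^[M] '' Set.univ) :=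
        (isCompact_univ.image (hcont M)).isClosed
      apply hclosed.mem_of_tendsto (hu r)
      apply Filter.Eventually.filter_mono hUle
      filter_upwards [Filter.eventually_ge_atTop (M + r)] with N hN
      have h1 : t N - r = M + (t N - r - M) := by
        have := htN N; omega
      refine ⟨f^[t N - r - M] (x N), Set.mem_univ _, ?_⟩
      rw [← Function.iterate_add_apply, ← h1]
    -- all u r lie in the same minimal set
    choose i hi using fun r => Set.mem_iUnion.mp (huL r)
    have hieq : ∀ r : ℕ, i r = i 0 := by
      intro r
      induction r with
      | zero => rfl
      | succ r ih =>
        rw [← ih]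
        by_contra hne
        have h1 : u r ∈ Y (i (r + 1)) := by
          rw [← hstep r]
          exact (hmin (i (r + 1))).2.2.1 ⟨u (r + 1), hi (r + 1), rfl⟩
        exact Set.disjoint_left.mp (hdisj _ _ hne) h1 (hi r)
    set i₀ := i 0 with hi₀
    have hiY : ∀ r : ℕ, u r ∈ Y i₀ := fun r => hieq r ▸ hi r
    -- the basin
    set B : Set X := ⋃ n : ℕ, f^[n] ⁻¹' V with hB_def
    have hBopen : IsOpen B := isOpen_iUnion fun n => hV.isOpen.preimage (hcont n)
    have hBback : ∀ z : X, f z ∈ B → z ∈ B := by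
      intro z hz
      obtain ⟨n, hn⟩ := Set.mem_iUnion.mp hz
      exact Set.mem_iUnion.mpr ⟨n + 1, by
        simpa [Function.iterate_succ_apply] using hn⟩
    -- Y i₀ ⊆ B, by minimality
    have hYB : Y i₀ ⊆ B := by
      by_contra hsub
      have hZne : (Y i₀ ∩ Bᶜ).Nonempty := by
        rw [Set.not_subset] at hsub
        obtain ⟨z, hz1, hz2⟩ := hsub
        exact ⟨z, hz1, hz2⟩
      have hZ := (hmin i₀).2.2.2 (Y i₀ ∩ Bᶜ) Set.inter_subset_left hZne
        ((hmin i₀).2.1.inter hBopen.isClosed_compl)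
        (by
          rintro w ⟨z, ⟨hz1, hz2⟩, rfl⟩
          refine ⟨(hmin i₀).2.2.1 ⟨z, hz1, rfl⟩, fun hw => hz2 (hBback z hw)⟩)
      have hu0B : u 0 ∈ B := Set.mem_iUnion.mpr ⟨0, by simpa using hu0⟩
      have h3 : u 0 ∈ Y i₀ ∩ Bᶜ := by rw [hZ]; exact hiY 0
      exact h3.2 hu0B
    -- finite subcover of Y i₀
    have hYcpt : IsCompact (Y i₀) := (hmin i₀).2.1.isCompact
    obtain ⟨s, hs⟩ := hYcpt.elim_finite_subcover (fun n : ℕ => f^[n] ⁻¹' V)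
      (fun n => hV.isOpen.preimage (hcont n)) hYB
    set M : ℕ := s.sup id with hM
    have hM' : ∀ n ∈ s, n ≤ M := fun n hn => Finset.le_sup (f := id) hn
    -- derive the contradiction
    obtain ⟨n, hns, hnV⟩ := Set.mem_iUnion₂.mp (hs (hiY (M + 1)))
    have hn : n ≤ M := hM' n hns
    have h1 : M + 1 = n + (M + 1 - n) := by omega
    have h2 : f^[n] (u (M + 1)) = u (M + 1 - n) := by
      conv_lhs => rw [h1]
      exact hiter n (M + 1 - n)
    rw [Set.mem_preimage, h2] at hnV
    exact huV (M + 1 - n) (by omega) hnV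
end

section
/- Let f : X → X be a continuous map on a compact symbolic space such that every nonempty closed f-invariant subset has nonempty interior. Then f has only finitely many minimal subsystems, and there exists m ∈ ℕ such that every point of X enters the union of the minimal subsystems within m steps; consequently the limit set ⋂_{n≥0} f^n(X) equals the union of the minimal subsystems. -/
section Aux

variable {X : Type*} [MetricSpace X] [CompactSpace X] {f : X → X}

lemma iter_mem_of_invariant {Y : Set X} (hY : f '' Y ⊆ Y) {x : X} (hx : x ∈ Y) (n : ℕ) :
    f^[n] x ∈ Y := by
  induction n with
  | zero => simpa
  | succ n ih => rw [Function.iterate_succ_apply']; exact hY ⟨_, ih, rfl⟩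

lemma minimal_eq_of_inter {Y Z : Set X} (hY : IsMinimalSubsystem f Y)
    (hZ : IsMinimalSubsystem f Z) (h : (Y ∩ Z).Nonempty) : Y = Z := by
  have hi : f '' (Y ∩ Z) ⊆ Y ∩ Z := by
    rintro x ⟨y, hy, rfl⟩
    exact ⟨hY.2.2.1 ⟨y, hy.1, rfl⟩, hZ.2.2.1 ⟨y, hy.2, rfl⟩⟩
  have h1 := hY.2.2.2 (Y ∩ Z) Set.inter_subset_left h (hY.2.1.inter hZ.2.1) hi
  have h2 := hZ.2.2.2 (Y ∩ Z) Set.inter_subset_right h (hY.2.1.inter hZ.2.1) hi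
  rw [← h1, h2]

lemma minimal_image_eq (hf : Continuous f) {Y : Set X} (hY : IsMinimalSubsystem f Y) :
    f '' Y = Y := by
  exact hY.2.2.2 _ hY.2.2.1 (hY.1.image f)
    ((hY.2.1.isCompact.image hf).isClosed) (Set.image_mono (f := f) hY.2.2.1)

lemma minimal_iterate_image_eq (hf : Continuous f) {Y : Set X} (hY : IsMinimalSubsystem f Y)
    (n : ℕ) : f^[n] '' Y = Y := by
  induction n with
  | zero => simp
  | succ n ih =>
      rw [Function.iterate_succ', Set.image_comp, ih, minimal_image_eq hf hY]

lemma exists_minimal_subset (hf : Continuous f) {A : Set X} (hne : A.Nonempty)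
    (hcl : IsClosed A) (hinv : f '' A ⊆ A) : ∃ Y ⊆ A, IsMinimalSubsystem f Y := by
  set S : Set (Set X) := {Z : Set X | Z.Nonempty ∧ IsClosed Z ∧ f '' Z ⊆ Z} with hS
  have hzorn : ∀ c ⊆ S, IsChain (· ⊆ ·) c → c.Nonempty →
      ∃ lb ∈ S, ∀ s ∈ c, lb ⊆ s := by
    intro c hcS hchain hcne
    refine ⟨⋂₀ c, ⟨?_, ?_, ?_⟩, fun s hs => Set.sInter_subset_of_mem hs⟩
    · have : Nonempty c := hcne.to_subtype
      refine IsCompact.nonempty_sInter_of_directed_nonempty_isCompact_isClosed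
        ?_ (fun U hU => (hcS hU).1) (fun U hU => (hcS hU).2.1.isCompact)
        (fun U hU => (hcS hU).2.1)
      intro a ha b hb
      rcases hchain.total ha hb with h | h
      · exact ⟨a, ha, Set.Subset.refl a, h⟩
      · exact ⟨b, hb, h, Set.Subset.refl b⟩
    · exact isClosed_sInter fun U hU => (hcS hU).2.1
    · intro x hx
      obtain ⟨y, hy, rfl⟩ := hx
      exact fun U hU => (hcS hU).2.2 ⟨y, hy U hU, rfl⟩
  obtain ⟨Y, hYA, hYmin⟩ := zorn_superset_nonempty S hzorn A ⟨hne, hcl, hinv⟩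
  refine ⟨Y, hYA, hYmin.1.1, hYmin.1.2.1, hYmin.1.2.2, fun Z hZY hZne hZcl hZinv => ?_⟩
  exact Set.Subset.antisymm hZY (hYmin.2 ⟨hZne, hZcl, hZinv⟩ hZY)

end Aux

/-- If every nonempty closed invariant subset has nonempty interior, then there
are finitely many minimal subsystems, every point enters their union in a
bounded number of steps, and the limit set equals the union of the minimal
subsystems. -/
theorem limit_set_of_subsystems_nonempty_interior (X : Type*) [MetricSpace X]
    [CompactSpace X]
    (hbasis : TopologicalSpace.IsTopologicalBasis {s : Set X | IsClopen s})
    (f : X → X) (hf : Continuous f)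
    (hsub : ∀ Y : Set X, Y.Nonempty → IsClosed Y → f '' Y ⊆ Y →
      (interior Y).Nonempty) :
    {Y : Set X | IsMinimalSubsystem f Y}.Finite ∧
      (∃ m : ℕ, ∀ x : X, ∃ n ≤ m, f^[n] x ∈ ⋃₀ {Y : Set X | IsMinimalSubsystem f Y}) ∧
      (⋂ n : ℕ, f^[n] '' Set.univ) = ⋃₀ {Y : Set X | IsMinimalSubsystem f Y} := by
  classical
  set 𝓜 : Set (Set X) := {Y : Set X | IsMinimalSubsystem f Y} with h𝓜
  -- Step A: every point enters the interior of some minimal subsystem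
  have stepA : ∀ x : X, ∃ n : ℕ, ∃ Y ∈ 𝓜, f^[n] x ∈ interior Y := by
    intro x
    set C : Set X := closure (Set.range fun n => f^[n] x) with hC
    have hCne : C.Nonempty := (Set.range_nonempty _).closure
    have hCcl : IsClosed C := isClosed_closure
    have hCinv : f '' C ⊆ C := by
      refine (image_closure_subset_closure_image hf).trans (closure_mono ?_)
      rintro y ⟨z, ⟨n, rfl⟩, rfl⟩
      exact ⟨n + 1, Function.iterate_succ_apply' f n x⟩
    obtain ⟨Y, hYC, hYmin⟩ := exists_minimal_subset hf hCne hCcl hCinv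
    obtain ⟨z, hz⟩ := hsub Y hYmin.1 hYmin.2.1 hYmin.2.2.1
    -- z ∈ interior Y ⊆ Y ⊆ C = closure of the orbit, and interior Y is open,
    -- so the orbit meets interior Y
    have hzC : z ∈ C := hYC (interior_subset hz)
    obtain ⟨w, hw1, n, rfl⟩ :=
      mem_closure_iff.1 hzC (interior Y) isOpen_interior hz
    exact ⟨n, Y, hYmin, hw1⟩
  -- Step B: finite subcover
  set ι := ℕ × {Y : Set X // Y ∈ 𝓜} with hι
  have hcover : Set.univ ⊆ ⋃ i : ι, f^[i.1] ⁻¹' interior i.2.1 := by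
    intro x _
    obtain ⟨n, Y, hY, hmem⟩ := stepA x
    exact Set.mem_iUnion.2 ⟨(n, ⟨Y, hY⟩), hmem⟩
  obtain ⟨t, ht⟩ := isCompact_univ.elim_finite_subcover
    (fun i : ι => f^[i.1] ⁻¹' interior i.2.1)
    (fun i => isOpen_interior.preimage (hf.iterate i.1)) hcover
  set m : ℕ := t.sup Prod.fst with hm
  -- Finiteness
  have hfin : 𝓜 ⊆ ↑(t.image fun i : ι => i.2.1) := by
    intro Y hY
    obtain ⟨y, hy⟩ := hY.1
    obtain ⟨i, hit, hi⟩ := Set.mem_iUnion₂.1 (ht (Set.mem_univ y))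
    have h1 : f^[i.1] y ∈ i.2.1 := interior_subset hi
    have h2 : f^[i.1] y ∈ Y := iter_mem_of_invariant hY.2.2.1 hy i.1
    have : Y = i.2.1 := minimal_eq_of_inter hY i.2.2 ⟨_, h2, h1⟩
    simp only [Finset.coe_image, Set.mem_image, Finset.mem_coe]
    exact ⟨i, hit, this.symm⟩
  refine ⟨Set.Finite.subset (t.image fun i : ι => i.2.1).finite_toSet hfin, ?_, ?_⟩
  -- bounded entry time
  · refine ⟨m, fun x => ?_⟩
    obtain ⟨i, hit, hi⟩ := Set.mem_iUnion₂.1 (ht (Set.mem_univ x))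
    exact ⟨i.1, Finset.le_sup hit, ⟨i.2.1, i.2.2, interior_subset hi⟩⟩
  -- limit set
  · apply Set.Subset.antisymm
    · intro x hx
      have hxm : x ∈ f^[m] '' Set.univ := Set.mem_iInter.1 hx m
      obtain ⟨y, -, rfl⟩ := hxm
      obtain ⟨i, hit, hi⟩ := Set.mem_iUnion₂.1 (ht (Set.mem_univ y))
      have hn : i.1 ≤ m := Finset.le_sup hit
      have h1 : f^[i.1] y ∈ i.2.1 := interior_subset hi
      have h2 : f^[m] y = f^[m - i.1] (f^[i.1] y) := by
        rw [← Function.iterate_add_apply, Nat.sub_add_cancel hn]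
      rw [h2]
      exact ⟨i.2.1, i.2.2, iter_mem_of_invariant i.2.2.2.2.1 h1 (m - i.1)⟩
    · rintro x ⟨Y, hY, hxY⟩
      refine Set.mem_iInter.2 fun n => ?_
      have : x ∈ f^[n] '' Y := by rw [minimal_iterate_image_eq hf hY]; exact hxY
      exact Set.image_mono (Set.subset_univ Y) this
end

section
/- A Devaney-chaotic dynamical system on an infinite compact metric space is sensitive at every point: there exists ε > 0 such that for every x and every δ > 0 there exist y with d(x,y) < δ and t ∈ ℕ with d(f^t(x), f^t(y)) > ε. -/
open Function Metric

private lemma iter_mul_self {X : Type*} {f : X → X} {q : X} {m : ℕ}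
    (h : f^[m] q = q) (s : ℕ) : f^[m * s] q = q := by
  induction s with
  | zero => simp
  | succ s ih => rw [Nat.mul_succ, Function.iterate_add_apply, h, ih]

private lemma iter_mod {X : Type*} {f : X → X} {p : X} {n : ℕ}
    (h : f^[n] p = p) (i : ℕ) : f^[i] p = f^[i % n] p := by
  conv_lhs => rw [← Nat.div_add_mod i n, Nat.add_comm]
  rw [Function.iterate_add_apply, iter_mul_self h]

/-- A Devaney-chaotic system (topologically transitive with dense periodic
points) on an infinite compact metric space is sensitive at every point. -/
theorem devaney_chaotic_sensitive (X : Type*) [MetricSpace X] [CompactSpace X]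
    [Infinite X] (f : X → X) (hf : Continuous f)
    (htrans : ∀ U V : Set X, IsOpen U → IsOpen V → U.Nonempty → V.Nonempty →
      ∃ n : ℕ, (f^[n] '' U ∩ V).Nonempty)
    (hper : Dense {x : X | ∃ n : ℕ, 0 < n ∧ f^[n] x = x}) :
    ∃ ε > (0 : ℝ), ∀ x : X, ∀ δ > (0 : ℝ), ∃ y : X, dist x y < δ ∧
      ∃ t : ℕ, dist (f^[t] x) (f^[t] y) > ε := by
  set P : Set X := {x : X | ∃ n : ℕ, 0 < n ∧ f^[n] x = x} with hP
  set P : Set X := {x : X | ∃ n : ℕ, 0 < n ∧ f^[n] x = x} with hP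
  -- P is infinite
  have hPinf : P.Infinite := by
    intro hfin
    have h1 : closure P = Set.univ := hper.closure_eq
    rw [hfin.isClosed.closure_eq] at h1
    exact Set.infinite_univ (h1 ▸ hfin)
  -- pick two periodic points with disjoint orbits
  obtain ⟨p₀, hp₀⟩ : P.Nonempty := hPinf.nonempty
  obtain ⟨np, hnp, hfp⟩ := hp₀
  have horbfin : (Set.range fun i => f^[i] p₀).Finite := by
    apply Set.Finite.subset ((Set.finite_Iio np).image fun i => f^[i] p₀)
    rintro _ ⟨i, rfl⟩
    exact ⟨i % np, Nat.mod_lt _ hnp, (iter_mod hfp i).symm⟩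
  obtain ⟨q₀, hq₀P, hq₀⟩ : ∃ q₀ ∈ P, q₀ ∉ Set.range fun i => f^[i] p₀ := by
    obtain ⟨q₀, hq₀P, hq₀⟩ := (hPinf.diff horbfin).nonempty
    exact ⟨q₀, hq₀P, hq₀⟩
  obtain ⟨nq, hnq, hfq⟩ := hq₀P
  -- the two orbits are disjoint
  have hdisj : ∀ i j : ℕ, f^[i] p₀ ≠ f^[j] q₀ := by
    intro i j hij
    apply hq₀
    have h1 : f^[nq * (j + 1)] q₀ = q₀ := iter_mul_self hfq _
    have h2 : j ≤ nq * (j + 1) := by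
      calc j ≤ j + 1 := Nat.le_succ j
        _ ≤ nq * (j + 1) := Nat.le_mul_of_pos_left _ hnq
    refine ⟨nq * (j + 1) - j + i, ?_⟩
    show f^[nq * (j + 1) - j + i] p₀ = q₀
    rw [Function.iterate_add_apply, hij, ← Function.iterate_add_apply,
      Nat.sub_add_cancel h2, h1]
  -- minimal distance between the two orbits
  have hnpne : (Finset.range np).Nonempty := Finset.nonempty_range_iff.mpr hnp.ne'
  have hnqne : (Finset.range nq).Nonempty := Finset.nonempty_range_iff.mpr hnq.ne'
  set D : Finset ℝ := ((Finset.range np) ×ˢ (Finset.range nq)).image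
      (fun ij => dist (f^[ij.1] p₀) (f^[ij.2] q₀)) with hD
  have hDne : D.Nonempty := Finset.Nonempty.image (hnpne.product hnqne) _
  set r : ℝ := D.min' hDne with hr
  have hrpos : 0 < r := by
    obtain ⟨ij, _, hij⟩ := Finset.mem_image.mp (D.min'_mem hDne)
    rw [hr, ← hij]
    exact dist_pos.mpr (hdisj _ _)
  have hrle : ∀ i j : ℕ, r ≤ dist (f^[i] p₀) (f^[j] q₀) := by
    intro i j
    rw [iter_mod hfp i, iter_mod hfq j]
    exact D.min'_le _ (Finset.mem_image.mpr
      ⟨(i % np, j % nq), Finset.mem_product.mpr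
        ⟨Finset.mem_range.mpr (Nat.mod_lt _ hnp), Finset.mem_range.mpr (Nat.mod_lt _ hnq)⟩, rfl⟩)
  refine ⟨r / 8, by linarith, ?_⟩
  set ε : ℝ := r / 8 with hε
  intro x δ hδ
  -- one of the two orbits stays far from x
  have hfar : (∀ i : ℕ, 4 * ε ≤ dist x (f^[i] p₀)) ∨ (∀ i : ℕ, 4 * ε ≤ dist x (f^[i] q₀)) := by
    by_contra h
    push_neg at h
    obtain ⟨⟨i, hi⟩, ⟨j, hj⟩⟩ := h
    have := dist_triangle_left (f^[i] p₀) (f^[j] q₀) x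
    have := hrle i j
    rw [hε] at hi hj
    linarith
  obtain ⟨p, hpfar, hpP⟩ : ∃ p : X, (∀ i : ℕ, 4 * ε ≤ dist x (f^[i] p)) ∧ p ∈ P := by
    rcases hfar with h | h
    · exact ⟨p₀, h, np, hnp, hfp⟩
    · exact ⟨q₀, h, nq, hnq, hfq⟩
  -- a periodic point q near x
  set δ' : ℝ := min δ ε with hδ'
  have hδ'pos : 0 < δ' := lt_min hδ (by linarith)
  obtain ⟨q, hqP, hqx⟩ : ∃ q ∈ P, dist x q < δ' := by
    obtain ⟨q, hq1, hq2⟩ := hper.exists_mem_open isOpen_ball ⟨x, mem_ball_self hδ'pos⟩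
    exact ⟨q, hq1, by rwa [mem_ball, dist_comm] at hq2⟩
  obtain ⟨m, hm, hfm⟩ := hqP
  -- target neighbourhood of p
  set U : Set X := ⋂ i ∈ Finset.range (m + 1), f^[i] ⁻¹' (ball (f^[i] p) ε) with hU
  have hUopen : IsOpen U := isOpen_biInter_finset fun i _ =>
    (isOpen_ball).preimage (hf.iterate i)
  have hpU : p ∈ U := Set.mem_iInter₂.mpr fun i _ => mem_ball_self (by linarith)
  obtain ⟨k, w, ⟨z, hzball, hzw⟩, hwU⟩ :=
    htrans (ball x δ') U isOpen_ball hUopen ⟨x, mem_ball_self hδ'pos⟩ ⟨p, hpU⟩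
  -- choose T = m * j with k < T ≤ k + m
  set j : ℕ := k / m + 1 with hj
  set T : ℕ := m * j with hT
  have hdm := Nat.div_add_mod k m
  have hmod := Nat.mod_lt k hm
  have hTk : k < T ∧ T - k ≤ m := by
    have : T = m * (k / m) + m := by rw [hT, hj, Nat.mul_succ]
    omega
  set i : ℕ := T - k with hi
  have hTeq : T = i + k := by omega
  have hiTz : f^[T] z ∈ ball (f^[i] p) ε := by
    have : w ∈ f^[i] ⁻¹' (ball (f^[i] p) ε) :=
      Set.mem_iInter₂.mp hwU i (Finset.mem_range.mpr (by omega))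
    rw [hTeq, Function.iterate_add_apply, hzw]
    exact this
  have hTq : f^[T] q = q := iter_mul_self hfm j
  -- the key distance estimate
  have hzx : dist x z < δ' := by rwa [mem_ball, dist_comm] at hzball
  have hqz : 2 * ε < dist q (f^[T] z) := by
    have h1 := hpfar i
    have h2 : dist (f^[T] z) (f^[i] p) < ε := mem_ball.mp hiTz
    have h3 : dist x (f^[i] p) ≤ dist x q + dist q (f^[T] z) + dist (f^[T] z) (f^[i] p) :=
      dist_triangle4 x q (f^[T] z) (f^[i] p)
    have h4 : dist x q < ε := lt_of_lt_of_le hqx (min_le_right _ _)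
    linarith
  have htri : dist q (f^[T] z) ≤ dist (f^[T] x) q + dist (f^[T] x) (f^[T] z) :=
    dist_triangle_left q (f^[T] z) (f^[T] x)
  rcases lt_or_ge ε (dist (f^[T] x) q) with hcase | hcase
  · exact ⟨q, lt_of_lt_of_le hqx (min_le_left _ _), T, by rwa [hTq]⟩
  · exact ⟨z, lt_of_lt_of_le hzx (min_le_left _ _), T, by linarith⟩
end

section
/- Let f : X → X be a continuous map on a compact metric space with the shadowing property, and let U, V be clopen subsets. Then there exists an orbit from U to V (some x ∈ U and n ≥ 0 with f^n(x) ∈ V) if and only if for every δ > 0 there exists a finite δ-pseudo-orbit starting in U and ending in V. -/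
lemma clopen_eps (X : Type*) [MetricSpace X] [CompactSpace X] {U : Set X}
    (hU : IsClopen U) : ∃ ε > (0 : ℝ), ∀ x ∈ U, ∀ y, dist y x < ε → y ∈ U := by
  obtain ⟨δ, hδ, hsub⟩ := (hU.isClosed.isCompact).exists_thickening_subset_open
    hU.isOpen (subset_refl U)
  exact ⟨δ, hδ, fun x hx y hy =>
    hsub (Metric.mem_thickening_iff.2 ⟨x, hx, hy⟩)⟩

/-- For a system with the shadowing property and clopen sets `U`, `V`, there is
an orbit from `U` to `V` iff for every `δ > 0` there is a finite `δ`-pseudo-orbit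
from `U` to `V`. -/
theorem orbit_iff_pseudo_orbits (X : Type*) [MetricSpace X] [CompactSpace X]
    (f : X → X) (hf : Continuous f)
    (hshadow : ∀ ε > (0 : ℝ), ∃ δ > (0 : ℝ), ∀ x : ℕ → X,
      (∀ n : ℕ, dist (f (x n)) (x (n + 1)) < δ) →
      ∃ y : X, ∀ n : ℕ, dist (f^[n] y) (x n) < ε)
    (U V : Set X) (hU : IsClopen U) (hV : IsClopen V) :
    (∃ x ∈ U, ∃ n : ℕ, f^[n] x ∈ V) ↔
      ∀ δ > (0 : ℝ), ∃ (k : ℕ) (x : ℕ → X), x 0 ∈ U ∧ x k ∈ V ∧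
        ∀ i < k, dist (f (x i)) (x (i + 1)) < δ := by
  constructor
  · rintro ⟨x, hx, n, hxn⟩ δ hδ
    refine ⟨n, fun i => f^[i] x, by simpa using hx, hxn, fun i _ => ?_⟩
    have : f (f^[i] x) = f^[i+1] x := (Function.iterate_succ_apply' f i x).symm
    simp [this, hδ]
  · intro h
    obtain ⟨εU, hεU, hUball⟩ := clopen_eps X hU
    obtain ⟨εV, hεV, hVball⟩ := clopen_eps X hV
    set ε := min εU εV with hε
    have hεpos : 0 < ε := lt_min hεU hεV
    obtain ⟨δ, hδ, hsh⟩ := hshadow ε hεpos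
    obtain ⟨k, x, hx0, hxk, hps⟩ := h δ hδ
    set y : ℕ → X := fun n => if n < k then x n else f^[n - k] (x k) with hy
    have hyk : y k = x k := by simp [hy]
    have hy0 : y 0 = x 0 := by
      by_cases h0 : 0 < k
      · simp [hy, h0]
      · simp [hy, Nat.eq_zero_of_not_pos h0]
    have hpsy : ∀ n : ℕ, dist (f (y n)) (y (n + 1)) < δ := by
      intro n
      by_cases hn : n + 1 < k
      · have hn' : n < k := Nat.lt_of_succ_lt hn
        simpa [hy, hn, hn'] using hps n hn'
      · by_cases hn2 : n < k
        · have hk : n + 1 = k := Nat.le_antisymm hn2 (Nat.not_lt.1 hn)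
          have := hps n hn2
          simpa [hy, hn2, hn, hk] using this
        · have h1 : n - k + 1 = n + 1 - k := by omega
          have : f (f^[n - k] (x k)) = f^[n + 1 - k] (x k) := by
            rw [← Function.iterate_succ_apply' f (n - k) (x k), Nat.succ_eq_add_one, h1]
          simpa [hy, hn, hn2, this] using hδ
    obtain ⟨z, hz⟩ := hsh y hpsy
    refine ⟨z, ?_, k, ?_⟩
    · have := hz 0
      rw [hy0] at this
      exact hUball _ hx0 z (by simpa using lt_of_lt_of_le this (min_le_left _ _))
    · have := hz k
      rw [hyk] at this
      exact hVball _ hxk _ (lt_of_lt_of_le this (min_le_right _ _))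
end
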